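/- Quantum Pinsker-type inequality (fidelity form): for quantum states ρ, σ on a finite-dimensional Hilbert space with supp(ρ) ⊆ supp(σ), F(ρ,σ) ≥ 2^{−D(ρ‖σ)/2}, where F is fidelity and D is the quantum relative entropy in bits. -/

import Mathlib

open Matrix Kronecker
open scoped ComplexOrder Classical

variable {n : Type*} [Fintype n] [DecidableEq n]

/-- Square root of a positive semidefinite matrix (junk value `0` otherwise). -/
noncomputable def msqrt (A : Matrix n n ℂ) : Matrix n n ℂ :=
  if h : A.PosSemidef then (h.1.eigenvectorUnitary : Matrix n n ℂ) *
    diagonal ((↑) ∘ Real.sqrt ∘ h.1.eigenvalues) * (star h.1.eigenvectorUnitary : Matrix n n ℂ)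
    else 0

/-- Trace norm `‖A‖₁ = Tr √(AᴴA)`. -/
noncomputable def traceNorm (A : Matrix n n ℂ) : ℝ :=
  (msqrt (Aᴴ * A)).trace.re

/-- Fidelity `F(ρ,σ) = ‖√ρ√σ‖₁`. -/
noncomputable def fidelity (ρ σ : Matrix n n ℂ) : ℝ :=
  traceNorm (msqrt ρ * msqrt σ)

/-- Purified distance `P(ρ,σ) = √(1 − F(ρ,σ)²)`. -/
noncomputable def purifiedDist (ρ σ : Matrix n n ℂ) : ℝ :=
  Real.sqrt (1 - (fidelity ρ σ) ^ 2)

/-- Matrix logarithm (base 2) via the functional calculus of a Hermitian matrix. -/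
noncomputable def mlog2 (A : Matrix n n ℂ) : Matrix n n ℂ :=
  if h : A.IsHermitian then h.cfc (fun x => Real.logb 2 x) else 0

/-- Quantum relative entropy (base 2): `D(ρ‖σ) = Tr(ρ log₂ ρ) − Tr(ρ log₂ σ)`. -/
noncomputable def relEnt (ρ σ : Matrix n n ℂ) : ℝ :=
  ((ρ * mlog2 ρ).trace - (ρ * mlog2 σ).trace).re



section aux

lemma convexOn_two_rpow : ConvexOn ℝ Set.univ (fun x : ℝ => (2:ℝ) ^ x) := by
  have h := convexOn_exp.comp_affineMap
    (LinearMap.toAffineMap (LinearMap.smulRight (LinearMap.id : ℝ →ₗ[ℝ] ℝ) (Real.log 2)))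
  simp only [Set.preimage_univ] at h
  convert h using 1
  iterate 4 rfl
  funext x
  simp [Function.comp, Real.rpow_def_of_pos, mul_comm]

lemma jensen_two_rpow {ι : Type*} [Fintype ι] (w t : ι → ℝ) (hw : ∀ i, 0 ≤ w i)
    (h1 : ∑ i, w i = 1) :
    (2:ℝ) ^ (∑ i, w i * t i) ≤ ∑ i, w i * (2:ℝ) ^ (t i) := by
  have := convexOn_two_rpow.map_sum_le (t := Finset.univ) (w := w) (p := t)
    (fun i _ => hw i) h1 (fun i _ => Set.mem_univ _)
  simpa [smul_eq_mul] using this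

lemma key_scalar (p q : ℝ) (c : ℝ) (hp : 0 ≤ p) (hq : 0 ≤ q) (hc : 0 ≤ c)
    (hsupp : q = 0 → c * p = 0) :
    c * p * (2:ℝ) ^ ((Real.logb 2 q - Real.logb 2 p) / 2)
      ≤ c * Real.sqrt p * Real.sqrt q := by
  rcases eq_or_lt_of_le hp with hp0 | hp0
  · simp [← hp0]
  rcases eq_or_lt_of_le hc with hc0 | hc0
  · simp [← hc0]
  rcases eq_or_lt_of_le hq with hq0 | hq0
  · have h := hsupp hq0.symm
    have : c * p > 0 := mul_pos hc0 hp0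
    nlinarith
  · have h2 : (Real.logb 2 q - Real.logb 2 p) / 2 = (Real.logb 2 q - Real.logb 2 p) * (1/2) := by
      ring
    rw [h2, Real.rpow_mul (by norm_num : (0:ℝ) ≤ 2), Real.rpow_sub (by norm_num : (0:ℝ) < 2),
      Real.rpow_logb (by norm_num) (by norm_num) hq0,
      Real.rpow_logb (by norm_num) (by norm_num) hp0, ← Real.sqrt_eq_rpow]
    rw [mul_assoc, Real.sqrt_div hq0.le, mul_div_assoc', mul_comm p, mul_div_assoc,
      Real.div_sqrt, mul_comm (Real.sqrt q), ← mul_assoc]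

/-- The main scalar inequality. -/
lemma key_ineq {n : Type*} [Fintype n] (p q : n → ℝ) (c : n → n → ℝ)
    (hp : ∀ i, 0 ≤ p i) (hq : ∀ j, 0 ≤ q j) (hc : ∀ i j, 0 ≤ c i j)
    (hrow : ∀ i, ∑ j, c i j = 1) (hp1 : ∑ i, p i = 1)
    (hsupp : ∀ i j, q j = 0 → c i j * p i = 0) :
    (2:ℝ) ^ (-(∑ i, p i * Real.logb 2 (p i) - ∑ i, ∑ j, c i j * p i * Real.logb 2 (q j)) / 2)
      ≤ ∑ i, ∑ j, c i j * Real.sqrt (p i) * Real.sqrt (q j) := by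
  set w : n × n → ℝ := fun ij => c ij.1 ij.2 * p ij.1 with hw
  set t : n × n → ℝ := fun ij => (Real.logb 2 (q ij.2) - Real.logb 2 (p ij.1)) / 2 with ht
  have hw0 : ∀ ij, 0 ≤ w ij := fun ij => mul_nonneg (hc _ _) (hp _)
  have hw1 : ∑ ij : n × n, w ij = 1 := by
    rw [Fintype.sum_prod_type]
    calc ∑ i, ∑ j, c i j * p i = ∑ i, (∑ j, c i j) * p i := by
          simp [Finset.sum_mul]
    _ = 1 := by simp only [hrow, one_mul, hp1]
  have hsum : ∑ ij : n × n, w ij * t ij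
      = -(∑ i, p i * Real.logb 2 (p i) - ∑ i, ∑ j, c i j * p i * Real.logb 2 (q j)) / 2 := by
    rw [Fintype.sum_prod_type]
    have hone : ∀ i, p i * Real.logb 2 (p i) = ∑ j, c i j * p i * Real.logb 2 (p i) := by
      intro i
      rw [← Finset.sum_mul, ← Finset.sum_mul, hrow i, one_mul]
    simp only [hw, ht]
    rw [Finset.sum_congr rfl (fun i _ => hone i) ]
    rw [← Finset.sum_sub_distrib]
    simp only [← Finset.sum_sub_distrib]
    have e : ∀ i j : n, c i j * p i * ((Real.logb 2 (q j) - Real.logb 2 (p i)) / 2)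
        = -((c i j * p i * Real.logb 2 (p i) - c i j * p i * Real.logb 2 (q j)) / 2) := by
      intros; ring
    simp only [e, Finset.sum_neg_distrib, ← Finset.sum_div]
    rw [neg_div]
  calc (2:ℝ) ^ (-(∑ i, p i * Real.logb 2 (p i) - ∑ i, ∑ j, c i j * p i * Real.logb 2 (q j)) / 2)
      = (2:ℝ) ^ (∑ ij : n × n, w ij * t ij) := by rw [hsum]
    _ ≤ ∑ ij : n × n, w ij * (2:ℝ) ^ (t ij) := jensen_two_rpow w t hw0 hw1
    _ ≤ ∑ ij : n × n, c ij.1 ij.2 * Real.sqrt (p ij.1) * Real.sqrt (q ij.2) := by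
        apply Finset.sum_le_sum
        intro ij _
        exact key_scalar (p ij.1) (q ij.2) (c ij.1 ij.2) (hp _) (hq _) (hc _ _)
          (fun h => hsupp _ _ h)
    _ = ∑ i, ∑ j, c i j * Real.sqrt (p i) * Real.sqrt (q j) := by rw [Fintype.sum_prod_type]

lemma trace_diag_mul_diag (a b : n → ℂ) (W : Matrix n n ℂ) :
    (diagonal a * W * diagonal b * Wᴴ).trace
      = ∑ i, ∑ j, a i * b j * (W i j * star (W i j)) := by
  simp only [Matrix.trace, Matrix.diag_apply, Matrix.mul_apply, Matrix.diagonal_apply,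
    conjTranspose_apply, Finset.sum_mul, Finset.mul_sum]
  simp [Finset.sum_ite, Finset.mul_sum]
  apply Finset.sum_congr rfl; intro i _
  apply Finset.sum_congr rfl; intro j _
  ring

lemma trace_conj_unitary (U : Matrix.unitaryGroup n ℂ) (B : Matrix n n ℂ) :
    ((U : Matrix n n ℂ) * B * star (U : Matrix n n ℂ)).trace = B.trace := by
  rw [Matrix.trace_mul_cycle, Unitary.coe_star_mul_self, Matrix.one_mul]

lemma trace_cfc_mul_cfc {A B : Matrix n n ℂ} (hA : A.IsHermitian) (hB : B.IsHermitian)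
    (f g : ℝ → ℝ) :
    ((hA.cfc f) * (hB.cfc g)).trace
      = ↑(∑ i, ∑ j, f (hA.eigenvalues i) * g (hB.eigenvalues j) *
          ‖(star (hA.eigenvectorUnitary : Matrix n n ℂ) *
            (hB.eigenvectorUnitary : Matrix n n ℂ)) i j‖ ^ 2) := by
  set U : Matrix n n ℂ := (hA.eigenvectorUnitary : Matrix n n ℂ) with hU
  set V : Matrix n n ℂ := (hB.eigenvectorUnitary : Matrix n n ℂ) with hV
  set W : Matrix n n ℂ := star U * V with hWdef
  have huu : U * star U = 1 := Unitary.coe_mul_star_self _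
  have hW : star W = star V * U := by
    rw [hWdef, StarMul.star_mul, star_star]
  have hrw : (hA.cfc f) * (hB.cfc g)
      = U * (diagonal (RCLike.ofReal ∘ f ∘ hA.eigenvalues) * W
          * diagonal (RCLike.ofReal ∘ g ∘ hB.eigenvalues) * star W) * star U := by
    rw [Matrix.IsHermitian.cfc, Matrix.IsHermitian.cfc, Unitary.conjStarAlgAut_apply,
      Unitary.conjStarAlgAut_apply, hW, hWdef]
    simp only [Matrix.mul_assoc, ← hU, ← hV, huu, Matrix.mul_one]
  rw [hrw, trace_conj_unitary hA.eigenvectorUnitary]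
  have := trace_diag_mul_diag (RCLike.ofReal ∘ f ∘ hA.eigenvalues)
    (RCLike.ofReal ∘ g ∘ hB.eigenvalues) W
  rw [← Matrix.star_eq_conjTranspose] at this
  rw [this]
  push_cast
  apply Finset.sum_congr rfl; intro i _
  apply Finset.sum_congr rfl; intro j _
  have h2 : W i j * star (W i j) = (‖W i j‖:ℂ) ^ 2 := RCLike.mul_conj _
  have h3 : ∀ r : ℝ, (RCLike.ofReal r : ℂ) = ↑r := fun r => rfl
  simp only [Function.comp_apply, h3]
  rw [mul_assoc, h2, mul_assoc]

lemma cfc_id_eq {A : Matrix n n ℂ} (hA : A.IsHermitian) : A = hA.cfc (fun x => x) := by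
  rw [Matrix.IsHermitian.cfc]
  exact hA.spectral_theorem

lemma trace_cfc {A : Matrix n n ℂ} (hA : A.IsHermitian) (f : ℝ → ℝ) :
    (hA.cfc f).trace = ↑(∑ i, f (hA.eigenvalues i)) := by
  rw [Matrix.IsHermitian.cfc, Unitary.conjStarAlgAut_apply, trace_conj_unitary hA.eigenvectorUnitary, Matrix.trace_diagonal]
  push_cast
  rfl

lemma trace_cfc_mul_cfc_same {A : Matrix n n ℂ} (hA : A.IsHermitian) (f g : ℝ → ℝ) :
    ((hA.cfc f) * (hA.cfc g)).trace = ↑(∑ i, f (hA.eigenvalues i) * g (hA.eigenvalues i)) := by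
  set U : Matrix n n ℂ := (hA.eigenvectorUnitary : Matrix n n ℂ) with hU
  have huu : star U * U = 1 := Unitary.coe_star_mul_self _
  have hrw : (hA.cfc f) * (hA.cfc g)
      = U * (diagonal (RCLike.ofReal ∘ f ∘ hA.eigenvalues)
          * diagonal (RCLike.ofReal ∘ g ∘ hA.eigenvalues)) * star U := by
    rw [Matrix.IsHermitian.cfc, Matrix.IsHermitian.cfc, Unitary.conjStarAlgAut_apply,
      Unitary.conjStarAlgAut_apply]
    have h2 : ∀ X : Matrix n n ℂ, star U * (U * X) = X := by
      intro X; rw [← Matrix.mul_assoc, huu, Matrix.one_mul]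
    simp only [Matrix.mul_assoc, ← hU, h2]
  rw [hrw, trace_conj_unitary hA.eigenvectorUnitary, Matrix.diagonal_mul_diagonal,
    Matrix.trace_diagonal]
  push_cast
  rfl

lemma diag_conj_entry (A V : Matrix n n ℂ) (j : n) :
    (star V * A * V) j j = dotProduct (star (fun k => V k j)) (A *ᵥ (fun k => V k j)) := by
  simp only [Matrix.mul_apply, Matrix.mulVec, dotProduct, star_apply, Pi.star_apply,
    Finset.mul_sum, Finset.sum_mul]
  rw [Finset.sum_comm]
  apply Finset.sum_congr rfl; intro k _
  apply Finset.sum_congr rfl; intro l _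
  ring

lemma re_dot_le_norm (x y : n → ℂ) :
    (dotProduct (star x) y).re ≤
      Real.sqrt ((dotProduct (star x) x).re) *
        Real.sqrt ((dotProduct (star y) y).re) := by
  set X : EuclideanSpace ℂ n := (WithLp.equiv 2 (n → ℂ)).symm x with hX
  set Y : EuclideanSpace ℂ n := (WithLp.equiv 2 (n → ℂ)).symm y with hY
  have h1 : (inner ℂ X Y : ℂ) = dotProduct (star x) y := by
    rw [dotProduct_comm]; exact EuclideanSpace.inner_toLp_toLp x y
  have h2 : (inner ℂ X X : ℂ) = dotProduct (star x) x := by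
    rw [dotProduct_comm]; exact EuclideanSpace.inner_toLp_toLp x x
  have h3 : (inner ℂ Y Y : ℂ) = dotProduct (star y) y := by
    rw [dotProduct_comm]; exact EuclideanSpace.inner_toLp_toLp y y
  calc (dotProduct (star x) y).re = (RCLike.re (inner ℂ X Y : ℂ)) := by rw [h1]; rfl
    _ ≤ ‖(inner ℂ X Y : ℂ)‖ := RCLike.re_le_norm _
    _ ≤ ‖X‖ * ‖Y‖ := norm_inner_le_norm X Y
    _ = Real.sqrt ((dotProduct (star x) x).re) *
        Real.sqrt ((dotProduct (star y) y).re) := by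
        rw [@norm_eq_sqrt_re_inner ℂ, @norm_eq_sqrt_re_inner ℂ, h2, h3]; rfl

lemma sqrt_eq_cfc {A : Matrix n n ℂ} (hA : A.PosSemidef) :
    (hA.1.eigenvectorUnitary : Matrix n n ℂ) * diagonal ((↑) ∘ Real.sqrt ∘ hA.1.eigenvalues) *
      (star hA.1.eigenvectorUnitary : Matrix n n ℂ) = hA.1.cfc Real.sqrt := rfl

lemma re_trace_le_traceNorm (A : Matrix n n ℂ) : A.trace.re ≤ traceNorm A := by
  have hB : (Aᴴ * A).PosSemidef := posSemidef_conjTranspose_mul_self A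
  have htn : traceNorm A = ∑ j, Real.sqrt (hB.1.eigenvalues j) := by
    rw [traceNorm, msqrt, dif_pos hB, sqrt_eq_cfc hB, trace_cfc, Complex.ofReal_re]
  set V : Matrix n n ℂ := (hB.1.eigenvectorUnitary : Matrix n n ℂ) with hV
  have huu : V * star V = 1 := Unitary.coe_mul_star_self _
  have htr : A.trace = (star V * A * V).trace := by
    rw [Matrix.trace_mul_cycle, huu, Matrix.one_mul]
  rw [htr, htn, Matrix.trace]
  rw [Complex.re_sum]
  apply Finset.sum_le_sum
  intro j _
  set v : n → ℂ := fun k => V k j with hv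
  have hvb : v = ⇑(hB.1.eigenvectorBasis j) := by
    funext k; rw [hv, hV]; exact Matrix.IsHermitian.eigenvectorUnitary_apply _ _ _
  have hnv : (dotProduct (star v) v).re = 1 := by
    have h1 : (inner ℂ ((WithLp.equiv 2 (n → ℂ)).symm v) ((WithLp.equiv 2 (n → ℂ)).symm v) : ℂ)
        = dotProduct (star v) v := by
      rw [dotProduct_comm]; exact EuclideanSpace.inner_toLp_toLp v v
    have h2 : (WithLp.equiv 2 (n → ℂ)).symm v = hB.1.eigenvectorBasis j := by
      rw [hvb]; rfl
    rw [← h1, h2]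
    have h3 : ‖hB.1.eigenvectorBasis j‖ = 1 := hB.1.eigenvectorBasis.orthonormal.1 j
    have h4 := inner_self_eq_norm_sq (𝕜 := ℂ) (hB.1.eigenvectorBasis j)
    rw [show ((inner ℂ (hB.1.eigenvectorBasis j) (hB.1.eigenvectorBasis j) : ℂ)).re
      = RCLike.re (inner ℂ (hB.1.eigenvectorBasis j) (hB.1.eigenvectorBasis j) : ℂ) from rfl, h4,
      h3]
    norm_num
  set y : n → ℂ := A *ᵥ v with hy
  have hyy : dotProduct (star y) y
      = (hB.1.eigenvalues j : ℂ) * dotProduct (star v) v := by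
    rw [hy, Matrix.star_mulVec, ← dotProduct_mulVec, Matrix.mulVec_mulVec]
    have h5 := hB.1.mulVec_eigenvectorBasis j
    rw [← hvb] at h5
    rw [h5, dotProduct_smul, RCLike.real_smul_eq_coe_mul]
    rfl
  have hdiag : (star V * A * V) j j = dotProduct (star v) y := by
    rw [diag_conj_entry]
  rw [Matrix.diag_apply, hdiag]
  calc (dotProduct (star v) y).re
      ≤ Real.sqrt ((dotProduct (star v) v).re) *
        Real.sqrt ((dotProduct (star y) y).re) := re_dot_le_norm v y
    _ = Real.sqrt (hB.1.eigenvalues j) := by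
        rw [hnv, hyy]
        have h6 : ((hB.1.eigenvalues j : ℂ) * dotProduct (star v) v).re
            = hB.1.eigenvalues j * (dotProduct (star v) v).re := by
          rw [Complex.re_ofReal_mul]
        rw [h6, hnv, mul_one, Real.sqrt_one, one_mul]

end aux

/-- Quantum Pinsker-type inequality in fidelity form: `F(ρ,σ) ≥ 2^{−D(ρ‖σ)/2}`. -/
theorem pinsker_fidelity (ρ σ : Matrix n n ℂ)
    (hρ : ρ.PosSemidef) (hρ1 : ρ.trace = 1)
    (hσ : σ.PosSemidef) (hσ1 : σ.trace = 1)
    (hsupp : ∀ v : n → ℂ, σ.mulVec v = 0 → ρ.mulVec v = 0) :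
    (2 : ℝ) ^ (-(relEnt ρ σ) / 2) ≤ fidelity ρ σ := by
  classical
  set p : n → ℝ := hρ.1.eigenvalues with hp_def
  set q : n → ℝ := hσ.1.eigenvalues with hq_def
  set U : Matrix n n ℂ := (hρ.1.eigenvectorUnitary : Matrix n n ℂ) with hU
  set V : Matrix n n ℂ := (hσ.1.eigenvectorUnitary : Matrix n n ℂ) with hV
  set W : Matrix n n ℂ := star U * V with hW
  set c : n → n → ℝ := fun i j => ‖W i j‖ ^ 2 with hc_def
  have hp : ∀ i, 0 ≤ p i := fun i => hρ.eigenvalues_nonneg i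
  have hq : ∀ j, 0 ≤ q j := fun j => hσ.eigenvalues_nonneg j
  have hc : ∀ i j, 0 ≤ c i j := fun i j => sq_nonneg _
  -- W is unitary-like: W * star W = 1
  have hWW : W * star W = 1 := by
    rw [hW, StarMul.star_mul, star_star]
    calc star U * V * (star V * U) = star U * (V * star V) * U := by
          simp only [Matrix.mul_assoc]
      _ = 1 := by
          have hVV : V * star V = 1 := Unitary.coe_mul_star_self hσ.1.eigenvectorUnitary
          have hUU : star U * U = 1 := Unitary.coe_star_mul_self hρ.1.eigenvectorUnitary
          rw [hVV, Matrix.mul_one, hUU]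
  have hrow : ∀ i, ∑ j, c i j = 1 := by
    intro i
    have h1 : (W * star W) i i = 1 := by rw [hWW]; simp
    have h2 : (W * star W) i i = ∑ j, W i j * star (W i j) := by
      simp [Matrix.mul_apply, Matrix.star_apply]
    have h3 : ∑ j, W i j * star (W i j) = ((∑ j, c i j : ℝ) : ℂ) := by
      push_cast
      apply Finset.sum_congr rfl
      intro j _
      rw [RCLike.star_def, RCLike.mul_conj]
      norm_cast
    rw [h2, h3] at h1
    exact_mod_cast h1
  -- sum of eigenvalues of ρ is 1
  have hcfcρ : ρ = hρ.1.cfc (fun x => x) := cfc_id_eq hρ.1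
  have hp1 : ∑ i, p i = 1 := by
    have := trace_cfc hρ.1 (fun x => x)
    rw [← hcfcρ, hρ1] at this
    exact_mod_cast this.symm
  -- support condition
  have hsupp' : ∀ i j, q j = 0 → c i j * p i = 0 := by
    intro i j hqj
    by_cases hpi : p i = 0
    · rw [hpi, mul_zero]
    have hv : σ *ᵥ (fun k => V k j) = 0 := by
      have hb : (fun k => V k j) = ⇑(hσ.1.eigenvectorBasis j) := by
        funext k; rw [hV]; exact Matrix.IsHermitian.eigenvectorUnitary_apply _ _ _
      rw [hb, hσ.1.mulVec_eigenvectorBasis, ← hq_def, hqj, zero_smul]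
    have hρv : ρ *ᵥ (fun k => V k j) = 0 := hsupp _ hv
    have hcol : ∀ k, (ρ * V) k j = 0 := by
      intro k
      have : (ρ * V) k j = (ρ *ᵥ (fun l => V l j)) k := by
        simp [Matrix.mul_apply, Matrix.mulVec, dotProduct]
      rw [this, hρv]
      rfl
    have hzero : (star U * (ρ * V)) i j = 0 := by
      rw [Matrix.mul_apply]
      apply Finset.sum_eq_zero
      intro k _
      rw [hcol k, mul_zero]
    have hdiag : star U * (ρ * V) = diagonal (RCLike.ofReal ∘ p) * W := by
      rw [← Matrix.mul_assoc]
      have h5 : star U * ρ = diagonal (RCLike.ofReal ∘ p) * star U := by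
        conv_lhs => rw [hρ.1.spectral_theorem, Unitary.conjStarAlgAut_apply]
        rw [← hU, ← hp_def]
        calc star U * (U * diagonal (RCLike.ofReal ∘ p) * star U)
            = (star U * U) * diagonal (RCLike.ofReal ∘ p) * star U := by
              simp only [Matrix.mul_assoc]
          _ = diagonal (RCLike.ofReal ∘ p) * star U := by
              rw [Unitary.coe_star_mul_self hρ.1.eigenvectorUnitary, Matrix.one_mul]
      rw [h5, Matrix.mul_assoc, ← hW]
    have hpW : (RCLike.ofReal (p i) : ℂ) * W i j = 0 := by
      have h7 : ((diagonal (RCLike.ofReal ∘ p) * W : Matrix n n ℂ)) i j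
          = ((star U * (ρ * V) : Matrix n n ℂ)) i j := by
        rw [hdiag]
      rw [Matrix.diagonal_mul, hzero] at h7
      exact h7
    have hWij : W i j = 0 := by
      rcases mul_eq_zero.1 hpW with h | h
      · exfalso; apply hpi
        have : (RCLike.ofReal (p i) : ℂ) = ((p i : ℝ) : ℂ) := rfl
        rw [this] at h
        exact_mod_cast h
      · exact h
    rw [hc_def]
    simp [hWij]
  -- relEnt formula
  have hmlogρ : mlog2 ρ = hρ.1.cfc (fun x => Real.logb 2 x) := dif_pos hρ.1
  have hmlogσ : mlog2 σ = hσ.1.cfc (fun x => Real.logb 2 x) := dif_pos hσ.1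
  have hcfcσ : σ = hσ.1.cfc (fun x => x) := cfc_id_eq hσ.1
  have hta : (ρ * mlog2 ρ).trace = ↑(∑ i, p i * Real.logb 2 (p i)) := by
    have h := trace_cfc_mul_cfc_same hρ.1 (fun x => x) (fun x => Real.logb 2 x)
    rw [← hcfcρ, ← hmlogρ] at h
    exact h
  have htb : (ρ * mlog2 σ).trace
      = ↑(∑ i, ∑ j, p i * Real.logb 2 (q j) * ‖W i j‖ ^ 2) := by
    have h := trace_cfc_mul_cfc hρ.1 hσ.1 (fun x => x) (fun x => Real.logb 2 x)
    rw [← hcfcρ, ← hmlogσ] at h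
    exact h
  have hrel : relEnt ρ σ
      = ∑ i, p i * Real.logb 2 (p i) - ∑ i, ∑ j, c i j * p i * Real.logb 2 (q j) := by
    simp only [relEnt]
    rw [hta, htb, Complex.sub_re, Complex.ofReal_re, Complex.ofReal_re]
    congr 1
    simp only [hc_def]
    apply Finset.sum_congr rfl; intro i _
    apply Finset.sum_congr rfl; intro j _
    ring
  -- fidelity lower bound
  have hsρ : msqrt ρ = hρ.1.cfc Real.sqrt := by rw [msqrt, dif_pos hρ, sqrt_eq_cfc hρ]
  have hsσ : msqrt σ = hσ.1.cfc Real.sqrt := by rw [msqrt, dif_pos hσ, sqrt_eq_cfc hσ]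
  have htc : (msqrt ρ * msqrt σ).trace
      = ↑(∑ i, ∑ j, Real.sqrt (p i) * Real.sqrt (q j) * ‖W i j‖ ^ 2) := by
    have h := trace_cfc_mul_cfc hρ.1 hσ.1 Real.sqrt Real.sqrt
    rw [← hsρ, ← hsσ] at h
    exact h
  have hfid : ∑ i, ∑ j, c i j * Real.sqrt (p i) * Real.sqrt (q j) ≤ fidelity ρ σ := by
    have h1 := re_trace_le_traceNorm (msqrt ρ * msqrt σ)
    rw [htc, Complex.ofReal_re] at h1
    calc ∑ i, ∑ j, c i j * Real.sqrt (p i) * Real.sqrt (q j)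
        = ∑ i, ∑ j, Real.sqrt (p i) * Real.sqrt (q j) * ‖W i j‖ ^ 2 := by
          simp only [hc_def]
          apply Finset.sum_congr rfl; intro i _
          apply Finset.sum_congr rfl; intro j _
          ring
      _ ≤ fidelity ρ σ := h1
  calc (2 : ℝ) ^ (-(relEnt ρ σ) / 2)
      = (2 : ℝ) ^ (-(∑ i, p i * Real.logb 2 (p i)
          - ∑ i, ∑ j, c i j * p i * Real.logb 2 (q j)) / 2) := by rw [hrel]
    _ ≤ ∑ i, ∑ j, c i j * Real.sqrt (p i) * Real.sqrt (q j) :=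
        key_ineq p q c hp hq hc hrow hp1 hsupp'
    _ ≤ fidelity ρ σ := hfid
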